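/- arXiv:1212.0581 — 6 statements merged into one kernel-verified Lean document; each statement's English description precedes it below -/
import Mathlib

section
/- Let G be a perfect group and A a normal abelian subgroup of G. Then [A,G] = [[A,G],G]. -/
/-- The set of `w`-values in `G`: all images of the word `w` under
evaluations of the variables in `G`. -/
def wValues (w : FreeGroup ℕ) (G : Type*) [Group G] : Set G :=
  {g | ∃ f : ℕ → G, FreeGroup.lift f w = g}

/-- The verbal subgroup of `G` determined by the word `w`: the subgroup
generated by the set of `w`-values. -/
def verbalSubgroup (w : FreeGroup ℕ) (G : Type*) [Group G] : Subgroup G :=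
  Subgroup.closure (wValues w G)

open scoped commutatorElement

/-- `IsMCWOn w S` : `w` is a multilinear (outer) commutator word whose set of
variables is exactly `S`.  Every variable is such a word, and the commutator of
two multilinear commutator words in disjoint sets of variables is again one. -/
inductive IsMCWOn : FreeGroup ℕ → Set ℕ → Prop
  | var (i : ℕ) : IsMCWOn (FreeGroup.of i) {i}
  | comm {w₁ w₂ : FreeGroup ℕ} {S₁ S₂ : Set ℕ} :
      IsMCWOn w₁ S₁ → IsMCWOn w₂ S₂ → Disjoint S₁ S₂ → IsMCWOn ⁅w₁, w₂⁆ (S₁ ∪ S₂)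

/-- A multilinear commutator word (outer commutator word). -/
def IsMultilinearCommutatorWord (w : FreeGroup ℕ) : Prop := ∃ S, IsMCWOn w S

/-- `N` is a `w`-subgroup of `G`: `N` is generated by cyclic subgroups `⟨x⟩`
contained in the set of `w`-values of `G`. -/
def IsWSubgroup (w : FreeGroup ℕ) {G : Type*} [Group G] (N : Subgroup G) : Prop :=
  ∃ X : Set G, (∀ x ∈ X, ∀ i : ℤ, x ^ i ∈ wValues w G) ∧ Subgroup.closure X = N

/-- A group is residually finite if every nontrivial element lies outside some
normal subgroup of finite index. -/
def ResiduallyFinite (G : Type*) [Group G] : Prop :=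
  ∀ g : G, g ≠ 1 → ∃ N : Subgroup G, N.Normal ∧ N.FiniteIndex ∧ g ∉ N

/-- The lower central word `γ_k`: `γ_1 = x_1` and `γ_k = [γ_{k-1}, x_k]`. -/
def gammaWord : ℕ → FreeGroup ℕ
  | 0 => 1
  | 1 => FreeGroup.of 0
  | (k + 2) => ⁅gammaWord (k + 1), FreeGroup.of (k + 1)⁆

/-- The image of `M` in `G ⧸ N` is an abelian `w`-subgroup of `G ⧸ N`. -/
def IsAbelianWSubgroupInQuotient (w : FreeGroup ℕ) {G : Type*} [Group G] (N M : Subgroup G)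
    (hN : N.Normal) : Prop :=
  haveI := hN
  IsMulCommutative (M.map (QuotientGroup.mk' N)) ∧ IsWSubgroup w (M.map (QuotientGroup.mk' N))

/-- The image of `M` in `G ⧸ N` is abelian and is a `w`-subgroup of `G ⧸ N` for
every multilinear commutator word `w`. -/
def IsAbelianWSubgroupInQuotientForAllWords {G : Type*} [Group G] (N M : Subgroup G)
    (hN : N.Normal) : Prop :=
  haveI := hN
  IsMulCommutative (M.map (QuotientGroup.mk' N)) ∧
    ∀ w : FreeGroup ℕ, IsMultilinearCommutatorWord w →
      IsWSubgroup w (M.map (QuotientGroup.mk' N))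

/-- If `G` is perfect and `A` is a normal abelian subgroup of `G`,
then `[A,G] = [[A,G],G]`. -/
theorem commutator_of_normal_abelian_in_perfect
    (G : Type*) [Group G] (hG : commutator G = ⊤)
    (A : Subgroup G) (hA : A.Normal) (hab : IsMulCommutative A) :
    ⁅A, (⊤ : Subgroup G)⁆ = ⁅⁅A, (⊤ : Subgroup G)⁆, (⊤ : Subgroup G)⁆ := by
  haveI := hA
  set N : Subgroup G := ⁅⁅A, (⊤ : Subgroup G)⁆, (⊤ : Subgroup G)⁆ with hN
  haveI : N.Normal := by infer_instance
  refine le_antisymm ?_ (Subgroup.commutator_le_left _ _)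
  let f := QuotientGroup.mk' N
  have hsurj : Function.Surjective f := QuotientGroup.mk'_surjective N
  have htop : (⊤ : Subgroup G).map f = ⊤ := Subgroup.map_top_of_surjective f hsurj
  have hmapN : N.map f = ⊥ := by
    rw [eq_bot_iff]
    intro x hx
    obtain ⟨y, hy, rfl⟩ := hx
    simpa [f, QuotientGroup.eq_one_iff] using hy
  have h1 : ⁅⁅(⊤ : Subgroup (G ⧸ N)), A.map f⁆, (⊤ : Subgroup (G ⧸ N))⁆ = ⊥ := by
    rw [Subgroup.commutator_comm (⊤ : Subgroup (G ⧸ N)), ← htop, ← Subgroup.map_commutator,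
      ← Subgroup.map_commutator, ← hN, hmapN]
  have h2 : ⁅⁅A.map f, (⊤ : Subgroup (G ⧸ N))⁆, (⊤ : Subgroup (G ⧸ N))⁆ = ⊥ := by
    rw [← htop, ← Subgroup.map_commutator, ← Subgroup.map_commutator, ← hN, hmapN]
  have h3 : ⁅⁅(⊤ : Subgroup (G ⧸ N)), (⊤ : Subgroup (G ⧸ N))⁆, A.map f⁆ = ⊥ :=
    Subgroup.commutator_commutator_eq_bot_of_rotate h1 h2
  have htt : ⁅(⊤ : Subgroup (G ⧸ N)), (⊤ : Subgroup (G ⧸ N))⁆ = ⊤ := by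
    rw [← htop, ← Subgroup.map_commutator, ← commutator_def, hG]
  rw [htt] at h3
  have h4 : (⁅A, (⊤ : Subgroup G)⁆).map f = ⊥ := by
    rw [Subgroup.map_commutator, htop, Subgroup.commutator_comm, h3]
  intro x hx
  have : f x ∈ (⁅A, (⊤ : Subgroup G)⁆).map f := ⟨x, hx, rfl⟩
  rw [h4, Subgroup.mem_bot] at this
  simpa [f, QuotientGroup.eq_one_iff] using this
end

section
/- Let G be a perfect group and A a normal abelian subgroup of G. Then [A,G] is a w-subgroup of G for every multilinear commutator word w. -/
open scoped commutatorElement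

open Subgroup

section Aux
variable {G : Type*} [Group G]

lemma wValues_conj_mem (w : FreeGroup ℕ) {x : G} (hx : x ∈ wValues w G) (g : G) :
    g * x * g⁻¹ ∈ wValues w G := by
  obtain ⟨f, rfl⟩ := hx
  refine ⟨fun i => g * f i * g⁻¹, ?_⟩
  have h : (FreeGroup.lift (fun i => g * f i * g⁻¹) : FreeGroup ℕ →* G)
      = ((MulAut.conj g).toMonoidHom.comp (FreeGroup.lift f)) := by
    apply FreeGroup.ext_hom; intro a; simp
  rw [h]; simp

lemma lift_agree {w : FreeGroup ℕ} {S : Set ℕ} (h : IsMCWOn w S) :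
    ∀ f g : ℕ → G, (∀ i ∈ S, f i = g i) → FreeGroup.lift f w = FreeGroup.lift g w := by
  induction h with
  | var i => intro f g hfg; simp [hfg i (by simp)]
  | comm h1 h2 hd ih1 ih2 =>
    intro f g hfg
    rw [map_commutatorElement, map_commutatorElement,
      ih1 f g (fun i hi => hfg i (Or.inl hi)), ih2 f g (fun i hi => hfg i (Or.inr hi))]

lemma comm_mem_wValues {w₁ w₂ : FreeGroup ℕ} {S₁ S₂ : Set ℕ} (h₁ : IsMCWOn w₁ S₁)
    (h₂ : IsMCWOn w₂ S₂) (hd : Disjoint S₁ S₂) {u v : G}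
    (hu : u ∈ wValues w₁ G) (hv : v ∈ wValues w₂ G) : ⁅u, v⁆ ∈ wValues ⁅w₁, w₂⁆ G := by
  classical
  obtain ⟨f₁, rfl⟩ := hu; obtain ⟨f₂, rfl⟩ := hv
  refine ⟨fun i => if i ∈ S₁ then f₁ i else f₂ i, ?_⟩
  rw [map_commutatorElement]
  congr 1
  · exact lift_agree h₁ _ f₁ (fun i hi => if_pos hi)
  · exact lift_agree h₂ _ f₂ (fun i hi => if_neg (fun hmem => Set.disjoint_left.mp hd hmem hi))

lemma closure_normal_of_conj {s : Set G} (hs : ∀ x ∈ s, ∀ g : G, g * x * g⁻¹ ∈ s) :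
    (Subgroup.closure s).Normal := by
  refine ⟨fun x hx g => ?_⟩
  have h : Subgroup.closure s ≤ (Subgroup.closure s).comap (MulAut.conj g).toMonoidHom := by
    rw [Subgroup.closure_le]
    intro y hy
    exact Subgroup.subset_closure (by simpa using hs y hy g)
  simpa using h hx

lemma commutator_closure_le {s t : Set G}
    (hs : ∀ x ∈ s, ∀ g : G, g * x * g⁻¹ ∈ s) (ht : ∀ x ∈ t, ∀ g : G, g * x * g⁻¹ ∈ t) :
    ⁅closure s, closure t⁆ ≤ closure {x | ∃ u ∈ s, ∃ v ∈ t, ⁅u, v⁆ = x} := by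
  set M := closure {x | ∃ u ∈ s, ∃ v ∈ t, ⁅u, v⁆ = x} with hM
  haveI hMn : M.Normal := by
    apply closure_normal_of_conj
    rintro x ⟨u, hu, v, hv, rfl⟩ g
    refine ⟨g * u * g⁻¹, hs u hu g, g * v * g⁻¹, ht v hv g, ?_⟩
    have := map_commutatorElement (MulAut.conj g).toMonoidHom u v
    simp only [commutatorElement_def]; group
  set π := QuotientGroup.mk' M with hπ
  have key : ∀ u ∈ s, ∀ v ∈ t, Commute (π u) (π v) := by
    intro u hu v hv
    rw [← commutatorElement_eq_one_iff_commute, ← map_commutatorElement]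
    rw [← MonoidHom.mem_ker, QuotientGroup.ker_mk']
    exact subset_closure ⟨u, hu, v, hv, rfl⟩
  have h2 : closure (π '' t) ≤ centralizer (π '' s) := by
    rw [closure_le]
    rintro _ ⟨v, hv, rfl⟩
    rw [SetLike.mem_coe, mem_centralizer_iff]
    rintro _ ⟨u, hu, rfl⟩
    exact key u hu v hv
  have h3 : closure (π '' s) ≤ centralizer (closure (π '' t) : Set (G ⧸ M)) := by
    rw [closure_le]
    rintro _ ⟨u, hu, rfl⟩
    rw [SetLike.mem_coe, mem_centralizer_iff]
    intro y hy
    exact ((h2 hy) _ ⟨u, hu, rfl⟩).symm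
  rw [Subgroup.commutator_le]
  intro a ha b hb
  have hπa : π a ∈ closure (π '' s) := by
    rw [← MonoidHom.map_closure]; exact ⟨a, ha, rfl⟩
  have hπb : π b ∈ closure (π '' t) := by
    rw [← MonoidHom.map_closure]; exact ⟨b, hb, rfl⟩
  have hcomm : Commute (π a) (π b) := (h3 hπa _ hπb).symm
  rw [← QuotientGroup.ker_mk' M, MonoidHom.mem_ker, map_commutatorElement]
  exact commutatorElement_eq_one_iff_commute.mpr hcomm

lemma closure_wValues_eq_top (hG : commutator G = ⊤) {w : FreeGroup ℕ} {S : Set ℕ}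
    (h : IsMCWOn w S) : closure (wValues w G) = ⊤ := by
  induction h with
  | var i =>
    have h1 : wValues (FreeGroup.of i) G = Set.univ := by
      ext g; simp only [Set.mem_univ, iff_true]
      exact ⟨fun _ => g, by simp⟩
    rw [h1]; simp
  | @comm w₁ w₂ S₁ S₂ h₁ h₂ hd ih₁ ih₂ =>
    refine le_antisymm le_top ?_
    have : (⊤ : Subgroup G) = ⁅closure (wValues w₁ G), closure (wValues w₂ G)⁆ := by
      rw [ih₁, ih₂, ← commutator_def, hG]
    rw [this]
    refine le_trans (commutator_closure_le (fun x hx g => wValues_conj_mem _ hx g)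
      (fun x hx g => wValues_conj_mem _ hx g)) ?_
    apply Subgroup.closure_mono
    rintro x ⟨u, hu, v, hv, rfl⟩
    exact comm_mem_wValues h₁ h₂ hd hu hv

end Aux

section Aux2
variable {G : Type*} [Group G]

lemma conj_mem_commutator {A : Subgroup G} (hA : A.Normal) {a : G} (ha : a ∈ A) (g : G) :
    ⁅a, g⁆ ∈ A := by
  have h : ⁅a, g⁆ = a * (g * a⁻¹ * g⁻¹) := by group
  rw [h]
  exact mul_mem ha (hA.conj_mem _ (inv_mem ha) g)

lemma comm_zpow {A : Subgroup G} (hA : A.Normal) (hab : IsMulCommutative A) {u : G} (hu : u ∈ A)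
    (v : G) (n : ℤ) : ⁅u, v⁆ ^ n = ⁅u ^ n, v⁆ := by
  haveI := hab
  have hc : v * u⁻¹ * v⁻¹ ∈ A := hA.conj_mem _ (inv_mem hu) v
  have hcom : Commute u (v * u⁻¹ * v⁻¹) := mul_comm_of_mem_isMulCommutative A hu hc
  have e : ⁅u, v⁆ = u * (v * u⁻¹ * v⁻¹) := by group
  rw [e, hcom.mul_zpow]
  have e2 : (v * u⁻¹ * v⁻¹) ^ n = v * (u ^ n)⁻¹ * v⁻¹ := by
    have := map_zpow (MulAut.conj v).toMonoidHom u⁻¹ n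
    simpa [inv_zpow, zpow_neg, mul_assoc] using this.symm
  rw [e2]; group

lemma commutator_comm_top (hG : commutator G = ⊤) (A : Subgroup G) (hA : A.Normal) :
    ⁅⁅A, (⊤ : Subgroup G)⁆, (⊤ : Subgroup G)⁆ = ⁅A, (⊤ : Subgroup G)⁆ := by
  haveI := hA
  haveI hBn : (⁅A, (⊤ : Subgroup G)⁆).Normal := Subgroup.commutator_normal A ⊤
  haveI hNn : (⁅⁅A, (⊤ : Subgroup G)⁆, (⊤ : Subgroup G)⁆).Normal :=
    Subgroup.commutator_normal _ _
  set N := ⁅⁅A, (⊤ : Subgroup G)⁆, (⊤ : Subgroup G)⁆ with hN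
  apply le_antisymm
  · rw [Subgroup.commutator_le]
    intro b hb g _
    exact conj_mem_commutator hBn hb g
  · set π := QuotientGroup.mk' N with hπ
    have hcent : ∀ b ∈ ⁅A, (⊤ : Subgroup G)⁆, ∀ g : G, Commute (π b) (π g) := by
      intro b hb g
      rw [← commutatorElement_eq_one_iff_commute, ← map_commutatorElement,
        ← MonoidHom.mem_ker, QuotientGroup.ker_mk']
      exact Subgroup.commutator_mem_commutator hb (mem_top g)
    rw [Subgroup.commutator_le]
    intro a ha g _
    have hmul : ∀ x y : G, π ⁅a, x * y⁆ = π ⁅a, x⁆ * π ⁅a, y⁆ := by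
      intro x y
      have e : ⁅a, x * y⁆ = ⁅a, x⁆ * (x * ⁅a, y⁆ * x⁻¹) := by group
      rw [e]
      simp only [map_mul, map_inv]
      have hcom := hcent ⁅a, y⁆ (Subgroup.commutator_mem_commutator ha (mem_top y)) x
      congr 1
      rw [← hcom.eq]
      group
    let ψ : G →* G ⧸ N := MonoidHom.mk' (fun g => π ⁅a, g⁆) hmul
    have hker : commutator G ≤ ψ.ker := by
      rw [_root_.commutator_def, Subgroup.commutator_le]
      intro x _ y _
      rw [MonoidHom.mem_ker, map_commutatorElement]
      apply commutatorElement_eq_one_iff_commute.mpr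
      have h1 : ψ x = π ⁅a, x⁆ := rfl
      have h2 : ψ y = π ⁅a, y⁆ := rfl
      rw [h1, h2]
      exact hcent _ (Subgroup.commutator_mem_commutator ha (mem_top x)) _
    rw [hG] at hker
    have : ψ g = 1 := hker (mem_top g)
    have : π ⁅a, g⁆ = 1 := this
    rwa [← MonoidHom.mem_ker, QuotientGroup.ker_mk'] at this

end Aux2

section Main
variable {G : Type*} [Group G]

lemma main_lemma (hG : commutator G = ⊤) (A : Subgroup G) (hA : A.Normal)
    (hab : IsMulCommutative A) {w : FreeGroup ℕ} {S : Set ℕ} (h : IsMCWOn w S) :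
    ∃ X : Set G, (∀ x ∈ X, ∀ g : G, g * x * g⁻¹ ∈ X) ∧ (∀ x ∈ X, x ∈ A) ∧
      (∀ x ∈ X, ∀ n : ℤ, x ^ n ∈ X) ∧ (X ⊆ wValues w G) ∧
      ⁅A, (⊤ : Subgroup G)⁆ ≤ closure X ∧
      ((∀ x ∈ X, x ∈ ⁅A, (⊤ : Subgroup G)⁆) ∨ wValues w G = Set.univ) := by
  induction h with
  | var i =>
    refine ⟨(A : Set G), fun x hx g => hA.conj_mem x hx g, fun x hx => hx,
      fun x hx n => zpow_mem hx n, fun x _ => ⟨fun _ => x, by simp⟩, ?_, Or.inr ?_⟩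
    · rw [Subgroup.closure_eq, Subgroup.commutator_le]
      intro a ha g _
      exact conj_mem_commutator hA ha g
    · ext g; simp only [Set.mem_univ, iff_true]
      exact ⟨fun _ => g, by simp⟩
  | @comm w₁ w₂ S₁ S₂ h₁ h₂ hd ih₁ ih₂ =>
    obtain ⟨X₁, c₁, a₁, p₁, v₁, e₁, -⟩ := ih₁
    refine ⟨{x | ∃ u ∈ X₁, ∃ v ∈ wValues w₂ G, ⁅u, v⁆ = x}, ?_, ?_, ?_, ?_, ?_, Or.inl ?_⟩
    · rintro x ⟨u, hu, v, hv, rfl⟩ g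
      refine ⟨g * u * g⁻¹, c₁ u hu g, g * v * g⁻¹, wValues_conj_mem _ hv g, ?_⟩
      have := map_commutatorElement (MulAut.conj g).toMonoidHom u v
      simp only [commutatorElement_def]; group
    · rintro x ⟨u, hu, v, hv, rfl⟩
      exact conj_mem_commutator hA (a₁ u hu) v
    · rintro x ⟨u, hu, v, hv, rfl⟩ n
      exact ⟨u ^ n, p₁ u hu n, v, hv, (comm_zpow hA hab (a₁ u hu) v n).symm⟩
    · rintro x ⟨u, hu, v, hv, rfl⟩
      exact comm_mem_wValues h₁ h₂ hd (v₁ hu) hv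
    · calc ⁅A, (⊤ : Subgroup G)⁆ = ⁅⁅A, (⊤ : Subgroup G)⁆, (⊤ : Subgroup G)⁆ :=
            (commutator_comm_top hG A hA).symm
        _ ≤ ⁅closure X₁, closure (wValues w₂ G)⁆ := by
            apply Subgroup.commutator_mono e₁
            rw [closure_wValues_eq_top hG h₂]
        _ ≤ closure {x | ∃ u ∈ X₁, ∃ v ∈ wValues w₂ G, ⁅u, v⁆ = x} :=
            commutator_closure_le c₁ (fun x hx g => wValues_conj_mem _ hx g)
    · rintro x ⟨u, hu, v, hv, rfl⟩
      exact Subgroup.commutator_mem_commutator (a₁ u hu) (mem_top v)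

end Main

/-- If `G` is perfect and `A` is a normal abelian subgroup of `G`,
then `[A,G]` is a `w`-subgroup of `G` for every multilinear commutator word `w`. -/
theorem commutator_of_normal_abelian_is_w_subgroup
    (G : Type*) [Group G] (hG : commutator G = ⊤)
    (A : Subgroup G) (hA : A.Normal) (hab : IsMulCommutative A) :
    ∀ w : FreeGroup ℕ, IsMultilinearCommutatorWord w →
      IsWSubgroup w ⁅A, (⊤ : Subgroup G)⁆ := by
  rintro w ⟨S, h⟩
  obtain ⟨X, hc, ha, hp, hv, he, hor⟩ := main_lemma hG A hA hab h
  rcases hor with hX | huniv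
  · exact ⟨X, fun x hx n => hv (hp x hx n),
      le_antisymm ((Subgroup.closure_le _).mpr hX) he⟩
  · exact ⟨(⁅A, (⊤ : Subgroup G)⁆ : Subgroup G), fun x _ n => by rw [huniv]; trivial,
      Subgroup.closure_eq _⟩
end

section
/- Let K be a normal subgroup of a group G and let w = [w_1,w_2] be a multilinear commutator word, where w_1 and w_2 are multilinear commutator words in disjoint sets of variables. Suppose that K is nilpotent of class two. If the image K/Z(K) is a w_1-subgroup in G/Z(K) and is also generated by w_2-values of G/Z(K), then the derived subgroup K' = [K,K] is a w-subgroup in G. -/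
open scoped commutatorElement

/-- The center of a normal subgroup `K ≤ G`, viewed inside `G` as
`C_G(K) ⊓ K`, is normal in `G`. -/
instance centerInNormal {G : Type*} [Group G] (K : Subgroup G) [hK : K.Normal] :
    (Subgroup.centralizer (K : Set G) ⊓ K).Normal := by
  constructor
  intro x hx g
  obtain ⟨hc, hk⟩ := hx
  have hc' : x ∈ Subgroup.centralizer (K : Set G) := hc
  have hk' : x ∈ K := hk
  refine Subgroup.mem_inf.mpr ⟨?_, hK.conj_mem x hk' g⟩
  rw [Subgroup.mem_centralizer_iff]
  intro h hh
  have hgh : g⁻¹ * h * g ∈ (K : Set G) := by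
    have := hK.conj_mem h hh g⁻¹
    simpa [mul_assoc] using this
  have key : (g⁻¹ * h * g) * x = x * (g⁻¹ * h * g) :=
    (Subgroup.mem_centralizer_iff.mp hc') _ hgh
  have e1 : h * (g * x * g⁻¹) = g * ((g⁻¹ * h * g) * x) * g⁻¹ := by group
  rw [e1, key]
  group

section Helpers
variable {G₀ : Type*} [Group G₀]

lemma commA {a b z z' : G₀} (hzb : Commute z b) (hzz' : Commute z z') (hz'a : Commute z' a) :
    ⁅a * z, b * z'⁆ = ⁅a, b⁆ := by
  simp only [commutatorElement_def, mul_inv_rev, mul_assoc]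
  rw [hzb.left_comm, hzz'.left_comm, mul_inv_cancel_left, hz'a.inv_right.left_comm,
    mul_inv_cancel_left]

lemma comm_id1 (x y z : G₀) : ⁅x * y, z⁆ = x * ⁅y, z⁆ * x⁻¹ * ⁅x, z⁆ := by group

lemma comm_id2 (x y : G₀) : ⁅x⁻¹, y⁆ = x⁻¹ * ⁅x, y⁆⁻¹ * x := by group

lemma comm_id3 (x y z : G₀) : ⁅x, y * z⁆ = ⁅x, y⁆ * (y * ⁅x, z⁆ * y⁻¹) := by group

lemma comm_id4 (x y : G₀) : ⁅x, y⁻¹⁆ = y⁻¹ * ⁅x, y⁆⁻¹ * y := by group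

lemma comm_pow_left {a b : G₀} (h : Commute ⁅a, b⁆ a) (n : ℕ) : ⁅a ^ n, b⁆ = ⁅a, b⁆ ^ n := by
  induction n with
  | zero => simp
  | succ n ih =>
      rw [pow_succ, comm_id1, ih, pow_succ]
      rw [← (h.pow_right n).eq, mul_inv_cancel_right]
      exact (pow_succ' _ _).symm.trans (pow_succ _ _)

lemma comm_zpow_left {a b : G₀} (h : Commute ⁅a, b⁆ a) (i : ℤ) : ⁅a ^ i, b⁆ = ⁅a, b⁆ ^ i := by
  obtain ⟨n, rfl | rfl⟩ := i.eq_nat_or_neg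
  · rw [zpow_natCast, zpow_natCast, comm_pow_left h]
  · have h2 : Commute (⁅a ^ n, b⁆⁻¹) (a ^ n) := ((comm_pow_left h n) ▸ (h.pow_pow n n)).inv_left
    rw [zpow_neg, zpow_neg, zpow_natCast, zpow_natCast, comm_id2, mul_assoc, h2.eq,
      inv_mul_cancel_left, comm_pow_left h]

lemma lift_eq_of_eqOn {w : FreeGroup ℕ} {S : Set ℕ} (h : IsMCWOn w S) {f g : ℕ → G₀}
    (hfg : ∀ i ∈ S, f i = g i) : FreeGroup.lift f w = FreeGroup.lift g w := by
  induction h with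
  | var i => simpa using hfg i rfl
  | comm h1 h2 hd ih1 ih2 =>
      rw [map_commutatorElement, map_commutatorElement,
        ih1 (fun i hi => hfg i (Set.mem_union_left _ hi)),
        ih2 (fun i hi => hfg i (Set.mem_union_right _ hi))]

lemma lift_comp {H : Type*} [Group H] (φ : G₀ →* H) (f : ℕ → G₀) (w : FreeGroup ℕ) :
    φ (FreeGroup.lift f w) = FreeGroup.lift (fun n => φ (f n)) w := by
  have h : φ.comp (FreeGroup.lift f) = FreeGroup.lift (fun n => φ (f n)) :=
    FreeGroup.ext_hom _ _ (by simp)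
  exact congrFun (congrArg (fun m => m.toFun) h) w

end Helpers


/-- Let `K ⊴ G` be nilpotent of class two and `w = [w₁,w₂]` a
multilinear commutator word (with `w₁`, `w₂` in disjoint sets of variables).  If
`K/Z(K)` is a `w₁`-subgroup of `G/Z(K)` and is generated by `w₂`-values of
`G/Z(K)`, then `K' = [K,K]` is a `w`-subgroup of `G`.  Here `Z(K) = C_G(K) ⊓ K`. -/
theorem derived_subgroup_is_w_subgroup
    (G : Type*) [Group G] (K : Subgroup G) [hK : K.Normal]
    (w₁ w₂ : FreeGroup ℕ) (S₁ S₂ : Set ℕ)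
    (h₁ : IsMCWOn w₁ S₁) (h₂ : IsMCWOn w₂ S₂) (hdisj : Disjoint S₁ S₂)
    (hnil : ⁅K, K⁆ ≤ Subgroup.centralizer (K : Set G) ⊓ K)
    (hw1 : IsWSubgroup w₁
      (K.map (QuotientGroup.mk' (Subgroup.centralizer (K : Set G) ⊓ K))))
    (hw2 : ∃ Y ⊆ wValues w₂ (G ⧸ (Subgroup.centralizer (K : Set G) ⊓ K)),
      Subgroup.closure Y
        = K.map (QuotientGroup.mk' (Subgroup.centralizer (K : Set G) ⊓ K))) :
    IsWSubgroup ⁅w₁, w₂⁆ ⁅K, K⁆ := by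
  
  classical
  set π : G →* G ⧸ (Subgroup.centralizer (K : Set G) ⊓ K) :=
    QuotientGroup.mk' (Subgroup.centralizer (K : Set G) ⊓ K) with hπdef
  obtain ⟨X, hX, hXcl⟩ := hw1
  obtain ⟨Y, hYsub, hYcl⟩ := hw2
  have hsurj : Function.Surjective π := by
    rw [hπdef]; exact QuotientGroup.mk'_surjective _
  have hker : ∀ g : G, π g = 1 ↔ g ∈ Subgroup.centralizer (K : Set G) ⊓ K := by
    intro g
    rw [hπdef, ← MonoidHom.mem_ker, QuotientGroup.ker_mk']
  have hcent : ∀ z, z ∈ Subgroup.centralizer (K : Set G) ⊓ K → ∀ k ∈ K, Commute z k := by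
    intro z hz k hk
    exact ((Subgroup.mem_centralizer_iff.mp (Subgroup.mem_inf.mp hz).1) k hk).symm
  have hcentral : ∀ a ∈ K, ∀ b ∈ K, ∀ k ∈ K, Commute ⁅a, b⁆ k := fun a ha b hb k hk =>
    hcent _ (hnil (Subgroup.commutator_mem_commutator ha hb)) k hk
  have hconj : ∀ a ∈ K, ∀ b ∈ K, ∀ k ∈ K, k * ⁅a, b⁆ * k⁻¹ = ⁅a, b⁆ := by
    intro a ha b hb k hk
    rw [(hcentral a ha b hb k hk).symm.eq, mul_inv_cancel_right]
  set X' : Set G := {g | ∃ x y : G, x ∈ K ∧ y ∈ K ∧ π x ∈ X ∧ π y ∈ Y ∧ ⁅x, y⁆ = g}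
    with hX'def
  refine ⟨X', ?_, ?_⟩
  · -- every power of a generator is a ⁅w₁,w₂⁆-value
    rintro g ⟨x, y, hxK, hyK, hxX, hyY, rfl⟩ i
    obtain ⟨fq, hfq⟩ := hX _ hxX i
    obtain ⟨gq, hgq⟩ := hYsub hyY
    choose f hf using fun n => hsurj (fq n)
    choose g hg using fun n => hsurj (gq n)
    refine ⟨fun n => if n ∈ S₁ then f n else g n, ?_⟩
    have e1 : FreeGroup.lift (fun n => if n ∈ S₁ then f n else g n) w₁ = FreeGroup.lift f w₁ :=
      lift_eq_of_eqOn h₁ (fun j hj => if_pos hj)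
    have e2 : FreeGroup.lift (fun n => if n ∈ S₁ then f n else g n) w₂ = FreeGroup.lift g w₂ :=
      lift_eq_of_eqOn h₂ (fun j hj => if_neg (Set.disjoint_right.mp hdisj hj))
    rw [map_commutatorElement, e1, e2,
      ← comm_zpow_left (hcentral x hxK y hyK x hxK) i]
    have hπu : π (FreeGroup.lift f w₁) = π (x ^ i) := by
      rw [lift_comp π f w₁, funext hf, hfq, map_zpow]
    have hπv : π (FreeGroup.lift g w₂) = π y := by
      rw [lift_comp π g w₂, funext hg, hgq]
    have hz : (x ^ i)⁻¹ * FreeGroup.lift f w₁ ∈ Subgroup.centralizer (K : Set G) ⊓ K := by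
      rw [← hker, map_mul, map_inv, hπu, inv_mul_cancel]
    have hz' : y⁻¹ * FreeGroup.lift g w₂ ∈ Subgroup.centralizer (K : Set G) ⊓ K := by
      rw [← hker, map_mul, map_inv, hπv, inv_mul_cancel]
    have hxiK : x ^ i ∈ K := zpow_mem hxK i
    calc ⁅FreeGroup.lift f w₁, FreeGroup.lift g w₂⁆
        = ⁅x ^ i * ((x ^ i)⁻¹ * FreeGroup.lift f w₁), y * (y⁻¹ * FreeGroup.lift g w₂)⁆ := by
          rw [mul_inv_cancel_left, mul_inv_cancel_left]
      _ = ⁅x ^ i, y⁆ :=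
          commA (hcent _ hz _ hyK) (hcent _ hz _ (Subgroup.mem_inf.mp hz').2)
            (hcent _ hz' _ hxiK)
  · -- the closure of X' is ⁅K, K⁆
    apply le_antisymm
    · rw [Subgroup.closure_le]
      rintro g ⟨x, y, hxK, hyK, -, -, rfl⟩
      exact Subgroup.commutator_mem_commutator hxK hyK
    · rw [Subgroup.commutator_def, Subgroup.closure_le]
      rintro g ⟨a, ha, b, hb, rfl⟩
      show ⁅a, b⁆ ∈ Subgroup.closure X'
      have inner : ∀ x : G, x ∈ K → π x ∈ X →
          ∀ r, r ∈ Subgroup.closure Y → ∀ c : G, c ∈ K → π c = r →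
          ⁅x, c⁆ ∈ Subgroup.closure X' := by
        intro x hxK hxX r hr
        induction hr using Subgroup.closure_induction with
        | mem r hrY =>
            intro c hcK hπc
            exact Subgroup.subset_closure ⟨x, c, hxK, hcK, hxX, hπc ▸ hrY, rfl⟩
        | one =>
            intro c hcK hπc
            have hcZ := (hker c).mp hπc
            rw [commutatorElement_eq_one_iff_commute.mpr ((hcent c hcZ x hxK).symm)]
            exact Subgroup.one_mem _
        | mul r₁ r₂ hr₁ hr₂ ih₁ ih₂ =>
            intro c hcK hπc
            have hr₁' : r₁ ∈ K.map π := by rw [← hYcl]; exact hr₁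
            obtain ⟨b₁, hb₁K, hπb₁⟩ := Subgroup.mem_map.mp hr₁'
            have hb₂K : b₁⁻¹ * c ∈ K := mul_mem (inv_mem hb₁K) hcK
            have hπb₂ : π (b₁⁻¹ * c) = r₂ := by
              rw [map_mul, map_inv, hπb₁, hπc, inv_mul_cancel_left]
            have e := comm_id3 x b₁ (b₁⁻¹ * c)
            rw [mul_inv_cancel_left] at e
            rw [e, hconj x hxK (b₁⁻¹ * c) hb₂K b₁ hb₁K]
            exact mul_mem (ih₁ b₁ hb₁K hπb₁) (ih₂ _ hb₂K hπb₂)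
        | inv r hr ih =>
            intro c hcK hπc
            have hmem : ⁅x, c⁻¹⁆ ∈ Subgroup.closure X' :=
              ih c⁻¹ (inv_mem hcK) (by rw [map_inv, hπc, inv_inv])
            have e : ⁅x, c⁻¹⁆ = ⁅x, c⁆⁻¹ := by
              rw [comm_id4, mul_assoc, (hcentral x hxK c hcK c hcK).inv_left.eq,
                inv_mul_cancel_left]
            rw [show ⁅x, c⁆ = ⁅x, c⁻¹⁆⁻¹ by rw [e, inv_inv]]
            exact inv_mem hmem
      have outer : ∀ q, q ∈ Subgroup.closure X → ∀ a' : G, a' ∈ K → π a' = q →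
          ∀ b' : G, b' ∈ K → ⁅a', b'⁆ ∈ Subgroup.closure X' := by
        intro q hq
        induction hq using Subgroup.closure_induction with
        | mem q hqX =>
            intro a' ha'K hπa' b' hb'K
            exact inner a' ha'K (hπa' ▸ hqX) (π b')
              (by rw [hYcl]; exact Subgroup.mem_map.mpr ⟨b', hb'K, rfl⟩) b' hb'K rfl
        | one =>
            intro a' ha'K hπa' b' hb'K
            have ha'Z := (hker a').mp hπa'
            rw [commutatorElement_eq_one_iff_commute.mpr (hcent a' ha'Z b' hb'K)]
            exact Subgroup.one_mem _
        | mul q₁ q₂ hq₁ hq₂ ih₁ ih₂ =>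
            intro a' ha'K hπa' b' hb'K
            have hq₁' : q₁ ∈ K.map π := by rw [← hXcl]; exact hq₁
            obtain ⟨a₁, ha₁K, hπa₁⟩ := Subgroup.mem_map.mp hq₁'
            have ha₂K : a₁⁻¹ * a' ∈ K := mul_mem (inv_mem ha₁K) ha'K
            have hπa₂ : π (a₁⁻¹ * a') = q₂ := by
              rw [map_mul, map_inv, hπa₁, hπa', inv_mul_cancel_left]
            have e := comm_id1 a₁ (a₁⁻¹ * a') b'
            rw [mul_inv_cancel_left] at e
            rw [e, hconj (a₁⁻¹ * a') ha₂K b' hb'K a₁ ha₁K]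
            exact mul_mem (ih₂ _ ha₂K hπa₂ b' hb'K) (ih₁ a₁ ha₁K hπa₁ b' hb'K)
        | inv q hq ih =>
            intro a' ha'K hπa' b' hb'K
            have hmem : ⁅a'⁻¹, b'⁆ ∈ Subgroup.closure X' :=
              ih a'⁻¹ (inv_mem ha'K) (by rw [map_inv, hπa', inv_inv]) b' hb'K
            have e : ⁅a'⁻¹, b'⁆ = ⁅a', b'⁆⁻¹ := by
              rw [comm_id2, mul_assoc, (hcentral a' ha'K b' hb'K a' ha'K).inv_left.eq,
                inv_mul_cancel_left]
            rw [show ⁅a', b'⁆ = ⁅a'⁻¹, b'⁆⁻¹ by rw [e, inv_inv]]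
            exact inv_mem hmem
      exact outer (π a) (by rw [hXcl]; exact Subgroup.mem_map.mpr ⟨a, ha, rfl⟩) a ha rfl b hb
end

section
/- Let G be a group having a normal soluble subgroup of finite index n whose derived length is d. Then G^{(i)} = G^{(i+1)} for some integer i ≤ d + n, where G^{(i)} denotes the i-th term of the derived series of G. -/
open scoped commutatorElement

namespace DSAux

open Subgroup

variable {G : Type*} [Group G]

/-- Iterated commutator subgroup within the ambient group. -/
def iDer (K : Subgroup G) : ℕ → Subgroup G
  | 0 => K
  | j + 1 => ⁅iDer K j, iDer K j⁆

lemma iDer_zero (K : Subgroup G) : iDer K 0 = K := rfl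

lemma iDer_succ (K : Subgroup G) (j : ℕ) : iDer K (j + 1) = ⁅iDer K j, iDer K j⁆ := rfl

lemma iDer_add (K : Subgroup G) (a b : ℕ) : iDer K (a + b) = iDer (iDer K a) b := by
  induction b with
  | zero => rfl
  | succ b ih => rw [← Nat.add_assoc, iDer_succ, iDer_succ, ih]

lemma iDer_mono {K L : Subgroup G} (h : K ≤ L) (j : ℕ) : iDer K j ≤ iDer L j := by
  induction j with
  | zero => exact h
  | succ j ih => exact Subgroup.commutator_mono ih ih

lemma commutator_le_self (K : Subgroup G) : ⁅K, K⁆ ≤ K := by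
  rw [Subgroup.commutator_le]
  intro g₁ h₁ g₂ h₂
  exact K.mul_mem (K.mul_mem (K.mul_mem h₁ h₂) (K.inv_mem h₁)) (K.inv_mem h₂)

lemma iDer_le_self (K : Subgroup G) (j : ℕ) : iDer K j ≤ K := by
  induction j with
  | zero => exact le_refl K
  | succ j ih => exact le_trans (commutator_le_self _) ih

lemma iDer_normal {K : Subgroup G} (h : K.Normal) (j : ℕ) : (iDer K j).Normal := by
  induction j with
  | zero => exact h
  | succ j ih => exact @Subgroup.commutator_normal G _ _ _ ih ih

lemma map_iDer {G' : Type*} [Group G'] (f : G →* G') (K : Subgroup G) (j : ℕ) :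
    (iDer K j).map f = iDer (K.map f) j := by
  induction j with
  | zero => rfl
  | succ j ih => rw [iDer_succ, Subgroup.map_commutator, ih, iDer_succ]

lemma iDer_eq_map_derivedSeries (K : Subgroup G) (j : ℕ) :
    iDer K j = (derivedSeries K j).map K.subtype := by
  induction j with
  | zero =>
    rw [iDer_zero, derivedSeries_zero, ← MonoidHom.range_eq_map, Subgroup.range_subtype]
  | succ j ih => rw [iDer_succ, derivedSeries_succ, Subgroup.map_commutator, ih]

lemma derivedSeries_eq_iDer_top (j : ℕ) : derivedSeries G j = iDer (⊤ : Subgroup G) j := by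
  induction j with
  | zero => rfl
  | succ j ih => rw [derivedSeries_succ, iDer_succ, ih]

lemma commutator_sup_le_left {A B C : Subgroup G} (hA : A.Normal) (hB : B.Normal)
    (hC : C.Normal) : ⁅A ⊔ B, C⁆ ≤ ⁅A, C⁆ ⊔ ⁅B, C⁆ := by
  haveI := hA; haveI := hB; haveI := hC
  rw [Subgroup.commutator_le]
  intro g hg c hc
  rw [← SetLike.mem_coe, Subgroup.mul_normal A B] at hg
  obtain ⟨a, ha, b, hb, rfl⟩ := hg
  have key : ⁅a * b, c⁆ = a * ⁅b, c⁆ * a⁻¹ * ⁅a, c⁆ := by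
    simp only [commutatorElement_def]; group
  rw [key]
  haveI : (⁅B, C⁆ : Subgroup G).Normal := Subgroup.commutator_normal B C
  exact Subgroup.mul_mem _
    (Subgroup.mem_sup_right (this.conj_mem _ (Subgroup.commutator_mem_commutator hb hc) a))
    (Subgroup.mem_sup_left (Subgroup.commutator_mem_commutator ha hc))

lemma step_one {X N : Subgroup G} (hX : X.Normal) (hN : N.Normal) (hNX : N ≤ X)
    (habel : ⁅N, N⁆ = (⊥ : Subgroup G)) (hsup : ⁅X, X⁆ ⊔ N = X) :
    iDer X 1 = iDer X 2 := by
  haveI := hX; haveI := hN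
  haveI hC : (iDer X 2).Normal := iDer_normal hX 2
  set π : G →* G ⧸ iDer X 2 := QuotientGroup.mk' (iDer X 2) with hπ
  have hsurj : Function.Surjective π := QuotientGroup.mk'_surjective _
  have hker : π.ker = iDer X 2 := QuotientGroup.ker_mk' _
  set P : Subgroup (G ⧸ iDer X 2) := X.map π with hP
  set M : Subgroup (G ⧸ iDer X 2) := N.map π with hM
  set P' : Subgroup (G ⧸ iDer X 2) := ⁅X, X⁆.map π with hP'
  haveI hPn : P.Normal := hX.map π hsurj
  haveI hMn : M.Normal := hN.map π hsurj
  haveI hP'n : P'.Normal := (Subgroup.commutator_normal X X).map π hsurj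
  haveI hSn : (P' ⊔ M).Normal := Subgroup.sup_normal P' M
  have hPsup : P' ⊔ M = P := by rw [hP', hM, hP, ← Subgroup.map_sup, hsup]
  have hMM : ⁅M, M⁆ = ⊥ := by
    rw [hM, ← Subgroup.map_commutator N N π, habel, Subgroup.map_bot]
  have hP'P' : ⁅P', P'⁆ = ⊥ := by
    have e1 : ⁅P', P'⁆ = (iDer X 2).map π := (Subgroup.map_commutator ⁅X, X⁆ ⁅X, X⁆ π).symm
    rw [e1, Subgroup.map_eq_bot_iff, hker]
  have hPP : ⁅P, P⁆ = P' := by rw [hP, hP', Subgroup.map_commutator X X π]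
  have hMle : M ≤ P := Subgroup.map_mono hNX
  have hle : P' ≤ M := by
    have h2 : ⁅P', P' ⊔ M⁆ ≤ M := by
      rw [Subgroup.commutator_comm]
      refine le_trans (commutator_sup_le_left hP'n hMn hP'n) ?_
      rw [hP'P']
      exact sup_le bot_le (Subgroup.commutator_le_left M P')
    have h3 : ⁅M, P' ⊔ M⁆ ≤ M := Subgroup.commutator_le_left M _
    calc P' = ⁅P, P⁆ := hPP.symm
      _ = ⁅P' ⊔ M, P' ⊔ M⁆ := by rw [hPsup]
      _ ≤ ⁅P', P' ⊔ M⁆ ⊔ ⁅M, P' ⊔ M⁆ := commutator_sup_le_left hP'n hMn hSn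
      _ ≤ M := sup_le h2 h3
  have hPM : P = M := le_antisymm (by rw [← hPsup]; exact sup_le hle (le_refl M)) hMle
  have hbot : P' = ⊥ := by rw [← hPP, hPM, hMM]
  have hXX : ⁅X, X⁆ ≤ iDer X 2 := by
    rw [← hker, ← Subgroup.map_eq_bot_iff]
    exact hbot
  exact le_antisymm hXX (commutator_le_self _)

lemma main_lemma : ∀ d : ℕ, ∀ X N : Subgroup G, X.Normal → N.Normal → N ≤ X →
    iDer N d = ⊥ → ⁅X, X⁆ ⊔ N = X → iDer X d = iDer X (d + 1)
  | 0, X, N, hX, hN, hNX, hNsol, hsup => by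
    have hNbot : N = ⊥ := hNsol
    rw [hNbot, sup_bot_eq] at hsup
    show X = ⁅X, X⁆
    exact hsup.symm
  | (d + 1), X, N, hX, hN, hNX, hNsol, hsup => by
    haveI := hX; haveI := hN
    set N₁ : Subgroup G := ⁅N, N⁆ with hN₁def
    haveI hN₁n : N₁.Normal := Subgroup.commutator_normal N N
    have hN₁X' : N₁ ≤ ⁅X, X⁆ := Subgroup.commutator_mono hNX hNX
    set π : G →* G ⧸ N₁ := QuotientGroup.mk' N₁ with hπ
    have hsurj : Function.Surjective π := QuotientGroup.mk'_surjective _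
    have hker : π.ker = N₁ := QuotientGroup.ker_mk' _
    -- apply step_one in the quotient
    have hq : iDer (X.map π) 1 = iDer (X.map π) 2 := by
      refine step_one (hX.map π hsurj) (hN.map π hsurj) (Subgroup.map_mono hNX) ?_ ?_
      · rw [← Subgroup.map_commutator N N π, ← hN₁def, Subgroup.map_eq_bot_iff, hker]
      · rw [← Subgroup.map_commutator X X π, ← Subgroup.map_sup, hsup]
    -- pull back: ⁅X,X⁆ = ⁅⁅X,X⁆,⁅X,X⁆⁆ ⊔ N₁
    have hmapeq : ⁅X, X⁆.map π = ⁅⁅X, X⁆, ⁅X, X⁆⁆.map π := by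
      have e1 : ⁅X, X⁆.map π = iDer (X.map π) 1 := Subgroup.map_commutator X X π
      have e2 : ⁅⁅X, X⁆, ⁅X, X⁆⁆.map π = iDer (X.map π) 2 := by
        show (iDer X 2).map π = _
        rw [map_iDer]
      rw [e1, e2, hq]
    have hpull : ⁅X, X⁆ ⊔ N₁ = ⁅⁅X, X⁆, ⁅X, X⁆⁆ ⊔ N₁ := by
      have := congrArg (Subgroup.comap π) hmapeq
      rwa [Subgroup.comap_map_eq, Subgroup.comap_map_eq, hker] at this
    have hX'eq : ⁅X, X⁆ = ⁅⁅X, X⁆, ⁅X, X⁆⁆ ⊔ N₁ := by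
      rw [← hpull, sup_eq_left.mpr hN₁X']
    -- apply induction hypothesis to X' := ⁅X,X⁆ and N₁
    have hN₁sol : iDer N₁ d = ⊥ := by
      have : iDer N (1 + d) = ⊥ := by rwa [Nat.add_comm]
      rwa [iDer_add N 1 d] at this
    have ih := main_lemma d ⁅X, X⁆ N₁ (Subgroup.commutator_normal X X) hN₁n
      hN₁X'
      hN₁sol hX'eq.symm
    -- translate back
    have key : iDer ⁅X, X⁆ d = iDer ⁅X, X⁆ (d + 1) := ih
    have t1 : iDer X (d + 1) = iDer ⁅X, X⁆ d := by
      rw [Nat.add_comm, iDer_add X 1 d]; rfl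
    have t2 : iDer X (d + 2) = iDer ⁅X, X⁆ (d + 1) := by
      rw [show d + 2 = 1 + (d + 1) by omega, iDer_add X 1 (d + 1)]; rfl
    rw [t1, show d + 1 + 1 = d + 2 from rfl, t2, key]

lemma exists_stable_step (Q : Type*) [Group Q] [Finite Q] {n : ℕ} (hn : Nat.card Q = n) :
    ∃ k ≤ n, derivedSeries Q k = derivedSeries Q (k + 1) := by
  by_contra hcon
  push_neg at hcon
  have hle : ∀ j, derivedSeries Q (j + 1) ≤ derivedSeries Q j := fun j => by
    rw [derivedSeries_succ]; exact commutator_le_self _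
  have hcard : ∀ j, j ≤ n + 1 → ((derivedSeries Q j : Set Q)).ncard + j ≤ n := by
    intro j
    induction j with
    | zero =>
      intro _
      simp [derivedSeries_zero, Set.ncard_univ, hn]
    | succ j ih =>
      intro hj
      have hj' : j ≤ n := by omega
      have hlt : ((derivedSeries Q (j + 1) : Set Q)).ncard <
          ((derivedSeries Q j : Set Q)).ncard := by
        refine Set.ncard_lt_ncard ?_ (Set.toFinite _)
        rw [Set.ssubset_iff_subset_ne]
        exact ⟨hle j, fun h => hcon j hj' (SetLike.coe_injective h).symm⟩
      have := ih (by omega)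
      omega
  have h1 : 0 < ((derivedSeries Q (n + 1) : Set Q)).ncard := by
    rw [Set.ncard_pos (Set.toFinite _)]
    exact ⟨1, (derivedSeries Q (n + 1)).one_mem⟩
  have := hcard (n + 1) le_rfl
  omega

end DSAux

/-- If `G` has a normal soluble subgroup of finite index `n` and
derived length `d`, then `G^{(i)} = G^{(i+1)}` for some `i ≤ d + n`. -/
theorem derived_series_stabilizes
    (G : Type*) [Group G] (A : Subgroup G) (hA : A.Normal)
    (n d : ℕ) (hn : A.index = n) (hn0 : n ≠ 0)
    (hd : derivedSeries A d = ⊥) :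
    ∃ i ≤ d + n, derivedSeries G i = derivedSeries G (i + 1) := by
  open DSAux Subgroup in
  haveI := hA
  haveI : A.FiniteIndex := ⟨by rw [hn]; exact hn0⟩
  have hcard : Nat.card (G ⧸ A) = n := by rw [← Subgroup.index_eq_card, hn]
  obtain ⟨k, hk, hstab⟩ := exists_stable_step (G ⧸ A) hcard
  set π : G →* G ⧸ A := QuotientGroup.mk' A with hπ
  have hsurj : Function.Surjective π := QuotientGroup.mk'_surjective A
  have hker : π.ker = A := QuotientGroup.ker_mk' A
  have hmap : ∀ j, (derivedSeries G j).map π = derivedSeries (G ⧸ A) j :=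
    fun j => map_derivedSeries_eq hsurj j
  set X : Subgroup G := derivedSeries G k with hXdef
  haveI hXn : X.Normal := derivedSeries_normal G k
  haveI hNn : (X ⊓ A).Normal :=
    ⟨fun x hx g => ⟨hXn.conj_mem x hx.1 g, hA.conj_mem x hx.2 g⟩⟩
  have hstep : derivedSeries G (k + 1) ≤ X := by
    rw [derivedSeries_succ]; exact DSAux.commutator_le_self _
  have hsup : ⁅X, X⁆ ⊔ (X ⊓ A) = X := by
    apply le_antisymm
    · exact sup_le (DSAux.commutator_le_self X) inf_le_left
    · intro x hx
      have h1 : π x ∈ (derivedSeries G (k + 1)).map π := by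
        rw [hmap, ← hstab, ← hmap]
        exact ⟨x, hx, rfl⟩
      obtain ⟨y, hy, hyx⟩ := h1
      have hyX' : y ∈ ⁅X, X⁆ := by
        rw [hXdef, ← derivedSeries_succ]; exact hy
      have hmemA : y⁻¹ * x ∈ A := by
        rw [← hker, MonoidHom.mem_ker, map_mul, map_inv, hyx, inv_mul_cancel]
      have hmemX : y⁻¹ * x ∈ X := X.mul_mem (X.inv_mem (hstep hy)) hx
      have := Subgroup.mul_mem _ (Subgroup.mem_sup_left hyX')
        (Subgroup.mem_sup_right (show y⁻¹ * x ∈ X ⊓ A from ⟨hmemX, hmemA⟩))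
      rwa [mul_inv_cancel_left] at this
  have hNsol : iDer (X ⊓ A) d = ⊥ := by
    rw [← le_bot_iff]
    refine le_trans (iDer_mono inf_le_right d) ?_
    rw [iDer_eq_map_derivedSeries, hd, Subgroup.map_bot]
  have main := main_lemma d X (X ⊓ A) hXn hNn inf_le_left hNsol hsup
  have e : ∀ j, derivedSeries G (k + j) = iDer X j := by
    intro j
    rw [derivedSeries_eq_iDer_top, iDer_add,
      show iDer (⊤ : Subgroup G) k = X from (derivedSeries_eq_iDer_top k).symm]
  refine ⟨k + d, by omega, ?_⟩
  rw [e d, show k + d + 1 = k + (d + 1) from rfl, e (d + 1), main]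
end

section
/- Let w be any group-word and G a group such that the set G_w of w-values is finite. Then the verbal subgroup w(G) is finite if and only if w(G) is periodic (every element of w(G) has finite order). -/
open scoped commutatorElement

section Dietzmann

variable {G : Type*} [Group G]

open List in
/-- Pull one occurrence of `x` out of a product of elements of `S`. -/
theorem dietzmann_pull [DecidableEq G] (S : Set G)
    (hconj : ∀ x ∈ S, ∀ g : G, g * x * g⁻¹ ∈ S) :
    ∀ (l : List G), (∀ a ∈ l, a ∈ S) → ∀ x ∈ l,
      ∃ l' : List G, (∀ a ∈ l', a ∈ S) ∧ l'.prod = x⁻¹ * l.prod ∧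
        l'.length + 1 = l.length ∧ l'.count x + 1 = l.count x := by
  intro l
  induction l with
  | nil => intro _ x hx; simp at hx
  | cons a t ih =>
    intro hmem x hx
    by_cases hax : a = x
    · subst hax
      refine ⟨t, fun b hb => hmem b (List.mem_cons_of_mem _ hb), ?_, by simp, by simp⟩
      simp [List.prod_cons, mul_assoc]
    · have hxt : x ∈ t := by
        rcases List.mem_cons.1 hx with h | h
        · exact absurd h.symm hax
        · exact h
      obtain ⟨t', ht'S, ht'prod, ht'len, ht'count⟩ :=
        ih (fun b hb => hmem b (List.mem_cons_of_mem _ hb)) x hxt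
      refine ⟨(x⁻¹ * a * x) :: t', ?_, ?_, ?_, ?_⟩
      · intro b hb
        rcases List.mem_cons.1 hb with h | h
        · subst h
          have := hconj a (hmem a List.mem_cons_self) x⁻¹
          simpa using this
        · exact ht'S b h
      · simp only [List.prod_cons, ht'prod]
        group
      · simp only [List.length_cons]; omega
      · have hne : x⁻¹ * a * x ≠ x := by
          intro h
          apply hax
          have : a * x = x * x := by
            have := congrArg (fun y => x * y) h
            simpa [mul_assoc] using this
          exact mul_right_cancel this
        rw [List.count_cons_of_ne hne]
        simpa [List.count_cons, hax] using ht'count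

open List in
/-- Pull `m` occurrences of `x` out of a product of elements of `S`. -/
theorem dietzmann_pull_many [DecidableEq G] (S : Set G)
    (hconj : ∀ x ∈ S, ∀ g : G, g * x * g⁻¹ ∈ S) :
    ∀ (m : ℕ) (l : List G), (∀ a ∈ l, a ∈ S) → ∀ x : G, m ≤ l.count x →
      ∃ l' : List G, (∀ a ∈ l', a ∈ S) ∧ x ^ m * l'.prod = l.prod ∧
        l'.length + m = l.length := by
  intro m
  induction m with
  | zero => intro l hl x _; exact ⟨l, hl, by simp, by simp⟩
  | succ m ih =>
    intro l hl x hcount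
    have hx : x ∈ l := by
      have : 0 < l.count x := by omega
      exact List.count_pos_iff.1 this
    obtain ⟨l₁, hl₁S, hl₁prod, hl₁len, hl₁count⟩ := dietzmann_pull S hconj l hl x hx
    obtain ⟨l₂, hl₂S, hl₂prod, hl₂len⟩ := ih l₁ hl₁S x (by omega)
    refine ⟨l₂, hl₂S, ?_, by omega⟩
    have : x ^ (m + 1) * l₂.prod = x * (x ^ m * l₂.prod) := by
      rw [pow_succ']; group
    rw [this, hl₂prod, hl₁prod]
    group

/-- Every product of elements of `S` equals a product of at most `B` elements of `S`,
where `B = |S| * (max order)`. -/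
theorem dietzmann_bound [DecidableEq G] (S : Set G) (hS : S.Finite)
    (hconj : ∀ x ∈ S, ∀ g : G, g * x * g⁻¹ ∈ S)
    (htor : ∀ x ∈ S, IsOfFinOrder x) :
    ∀ (l : List G), (∀ a ∈ l, a ∈ S) →
      ∃ l' : List G, (∀ a ∈ l', a ∈ S) ∧ l'.prod = l.prod ∧
        l'.length ≤ hS.toFinset.card * (hS.toFinset.sup fun x => orderOf x) := by
  classical
  set s := hS.toFinset with hs
  set e := s.sup fun x => orderOf x with he
  set B := s.card * e with hB
  suffices H : ∀ n (l : List G), l.length = n → (∀ a ∈ l, a ∈ S) →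
      ∃ l' : List G, (∀ a ∈ l', a ∈ S) ∧ l'.prod = l.prod ∧ l'.length ≤ B by
    intro l hl; exact H l.length l rfl hl
  intro n
  induction n using Nat.strong_induction_on with
  | _ n ih =>
  intro l hn hl
  by_cases hlen : l.length ≤ B
  · exact ⟨l, hl, rfl, hlen⟩
  · -- pigeonhole: some x has count ≥ e
    push_neg at hlen
    have hsub : l.toFinset ⊆ s := by
      intro a ha
      rw [hs, Set.Finite.mem_toFinset]
      exact hl a (List.mem_toFinset.1 ha)
    have hsum : ∑ a ∈ l.toFinset, l.count a = l.length := by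
      simpa using Multiset.toFinset_sum_count_eq (l : Multiset G)
    have hexists : ∃ x ∈ l, e ≤ l.count x := by
      by_contra hcon
      push_neg at hcon
      have hbound : ∀ a ∈ l.toFinset, l.count a ≤ e - 1 := by
        intro a ha
        have := hcon a (List.mem_toFinset.1 ha)
        omega
      have : l.length ≤ l.toFinset.card * (e - 1) := by
        rw [← hsum]
        calc ∑ a ∈ l.toFinset, l.count a ≤ ∑ _a ∈ l.toFinset, (e - 1) :=
              Finset.sum_le_sum hbound
          _ = l.toFinset.card * (e - 1) := by rw [Finset.sum_const, smul_eq_mul]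
      have hcard : l.toFinset.card ≤ s.card := Finset.card_le_card hsub
      have : l.length ≤ s.card * (e - 1) := this.trans (Nat.mul_le_mul_right _ hcard)
      have : l.length ≤ s.card * e := this.trans (Nat.mul_le_mul_left _ (by omega))
      omega
    obtain ⟨x, hxl, hxcount⟩ := hexists
    have hxS : x ∈ S := hl x hxl
    have hord : IsOfFinOrder x := htor x hxS
    have hordpos : 0 < orderOf x := hord.orderOf_pos
    have hordle : orderOf x ≤ e := by
      rw [he]
      exact Finset.le_sup (f := fun x => orderOf x) (by rw [hs, Set.Finite.mem_toFinset]; exact hxS)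
    obtain ⟨l', hl'S, hl'prod, hl'len⟩ :=
      dietzmann_pull_many S hconj (orderOf x) l hl x (hordle.trans hxcount)
    have hprodeq : l'.prod = l.prod := by
      rw [← hl'prod, pow_orderOf_eq_one, one_mul]
    obtain ⟨l'', hl''S, hl''prod, hl''len⟩ := ih l'.length (by omega) l' rfl hl'S
    exact ⟨l'', hl''S, by rw [hl''prod, hprodeq], hl''len⟩

/-- A list of elements of `S` whose product is the inverse. -/
theorem dietzmann_inv (S : Set G) (htor : ∀ x ∈ S, IsOfFinOrder x) :
    ∀ (l : List G), (∀ a ∈ l, a ∈ S) →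
      ∃ l' : List G, (∀ a ∈ l', a ∈ S) ∧ l'.prod = l.prod⁻¹ := by
  intro l
  induction l with
  | nil => intro _; exact ⟨[], by simp, by simp⟩
  | cons a t ih =>
    intro hmem
    obtain ⟨t', ht'S, ht'prod⟩ := ih (fun b hb => hmem b (List.mem_cons_of_mem _ hb))
    have haS : a ∈ S := hmem a List.mem_cons_self
    have hord := (htor a haS).orderOf_pos
    refine ⟨t' ++ List.replicate (orderOf a - 1) a, ?_, ?_⟩
    · intro b hb
      rcases List.mem_append.1 hb with h | h
      · exact ht'S b h
      · rw [List.eq_of_mem_replicate h]; exact haS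
    · rw [List.prod_append, ht'prod, List.prod_replicate]
      have hinv : a ^ (orderOf a - 1) = a⁻¹ := by
        have h1 : a * a ^ (orderOf a - 1) = a ^ orderOf a := by
          rw [← pow_succ']
          congr 1
          omega
        rw [pow_orderOf_eq_one] at h1
        exact eq_inv_of_mul_eq_one_right h1
      rw [hinv, List.prod_cons, mul_inv_rev]

/-- **Dietzmann's lemma**: the subgroup generated by a finite, conjugation-closed
set of torsion elements is finite. -/
theorem dietzmann (S : Set G) (hS : S.Finite)
    (hconj : ∀ x ∈ S, ∀ g : G, g * x * g⁻¹ ∈ S)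
    (htor : ∀ x ∈ S, IsOfFinOrder x) :
    ((Subgroup.closure S : Subgroup G) : Set G).Finite := by
  classical
  set B := hS.toFinset.card * (hS.toFinset.sup fun x => orderOf x) with hB
  -- every element of the closure is a product of a list of elements of S
  have hrep : ∀ g ∈ Subgroup.closure S, ∃ l : List G, (∀ a ∈ l, a ∈ S) ∧ l.prod = g := by
    intro g hg
    induction hg using Subgroup.closure_induction with
    | mem x hx => exact ⟨[x], by simpa using hx, by simp⟩
    | one => exact ⟨[], by simp, by simp⟩
    | mul x y _ _ ihx ihy =>
      obtain ⟨lx, hlx, hlxp⟩ := ihx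
      obtain ⟨ly, hly, hlyp⟩ := ihy
      refine ⟨lx ++ ly, ?_, by rw [List.prod_append, hlxp, hlyp]⟩
      intro a ha
      rcases List.mem_append.1 ha with h | h
      · exact hlx a h
      · exact hly a h
    | inv x _ ihx =>
      obtain ⟨l, hl, hlp⟩ := ihx
      obtain ⟨l', hl', hl'p⟩ := dietzmann_inv S htor l hl
      exact ⟨l', hl', by rw [hl'p, hlp]⟩
  haveI : Finite ↥S := hS.to_subtype
  have hfin : ((fun l : List ↥S => (l.map Subtype.val).prod) ''
      {l : List ↥S | l.length ≤ B}).Finite :=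
    (List.finite_length_le ↥S B).image _
  apply hfin.subset
  intro g hg
  obtain ⟨l, hl, hlp⟩ := hrep g hg
  obtain ⟨l', hl'S, hl'prod, hl'len⟩ := dietzmann_bound S hS hconj htor l hl
  refine ⟨l'.pmap (fun a ha => (⟨a, ha⟩ : ↥S)) hl'S, ?_, ?_⟩
  · simpa [List.length_pmap] using hl'len
  · have hmap : ((l'.pmap (fun a ha => (⟨a, ha⟩ : ↥S)) hl'S).map Subtype.val) = l' := by
      simp [List.map_pmap]
    dsimp only
    rw [hmap, hl'prod, hlp]

end Dietzmann

/-- If the set of `w`-values of `G` is finite, then `w(G)` is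
finite if and only if it is periodic. -/
theorem verbal_subgroup_finite_iff_periodic
    (w : FreeGroup ℕ) (G : Type*) [Group G]
    (hfin : (wValues w G).Finite) :
    ((verbalSubgroup w G : Set G)).Finite ↔
      ∀ g ∈ verbalSubgroup w G, IsOfFinOrder g := by
  constructor
  · intro hH g hg
    haveI : Finite ↥(verbalSubgroup w G) := hH.to_subtype
    have h := isOfFinOrder_of_finite (⟨g, hg⟩ : verbalSubgroup w G)
    exact Submonoid.isOfFinOrder_coe.2 h
  · intro hper
    have hconj : ∀ x ∈ wValues w G, ∀ g : G, g * x * g⁻¹ ∈ wValues w G := by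
      rintro x ⟨f, hf⟩ g
      refine ⟨fun i => g * f i * g⁻¹, ?_⟩
      have : (FreeGroup.lift fun i => g * f i * g⁻¹) w =
          ((MulAut.conj g).toMonoidHom.comp (FreeGroup.lift f)) w := by
        refine (FreeGroup.lift_unique _ ?_).symm
        intro i
        simp [MulAut.conj]
      rw [this]
      simp only [MonoidHom.comp_apply, hf]
      simp [MulAut.conj]
    have htor : ∀ x ∈ wValues w G, IsOfFinOrder x := fun x hx =>
      hper x (Subgroup.subset_closure hx)
    exact dietzmann (wValues w G) hfin hconj htor
end

section
/- Let w be any group-word and G a group having precisely m w-values. If w(G) has finite exponent e, then the order of w(G) is bounded above by a quantity depending only on e and m. -/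
open scoped commutatorElement

universe u


open scoped IsMulCommutative in
open Subgroup in
private theorem aux_closure_card_bound {G : Type u} [Group G] (e m : ℕ) (he : 0 < e) (S : Set G) [Finite S]
    (hconj : ∀ g x : G, x ∈ S → g * x * g⁻¹ ∈ S)
    (hm : Nat.card S = m)
    (he' : ∀ g ∈ closure S, g ^ e = 1) :
    Nat.card (closure S) ≠ 0 ∧
      Nat.card (closure S) ≤ e ^ (m.factorial * m) * m.factorial := by
  classical
  -- permutation representation by conjugation
  let π : G →* Equiv.Perm S :=
    { toFun := fun g =>
        { toFun := fun x => ⟨g * x * g⁻¹, hconj g x x.2⟩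
          invFun := fun x => ⟨g⁻¹ * x * g, by simpa using hconj g⁻¹ x x.2⟩
          left_inv := fun x => by ext; simp; group
          right_inv := fun x => by ext; simp; group }
      map_one' := by ext x; simp
      map_mul' := fun a b => by ext x; simp [mul_assoc] }
  let ψ : ↥(closure S) →* Equiv.Perm S := π.comp (closure S).subtype
  set K : Subgroup ↥(closure S) := ψ.ker with hK
  have hkercent : ∀ x : ↥(closure S), x ∈ K → (x : G) ∈ centralizer S := by
    intro x hx
    rw [MonoidHom.mem_ker] at hx
    rw [mem_centralizer_iff]
    intro h hh
    have := congrArg Subtype.val (Equiv.ext_iff.mp hx ⟨h, hh⟩)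
    simp only [π, ψ] at this
    -- this : ↑x * h * (↑x)⁻¹ = h
    have h2 : (x : G) * h = h * (x : G) := mul_inv_eq_iff_eq_mul.mp this
    exact h2.symm
  haveI hcomm : IsMulCommutative K := by
    rw [← le_centralizer_iff_isMulCommutative]
    intro x hx
    rw [mem_centralizer_iff]
    intro y hy
    have hy' : (y : G) ∈ centralizer S := hkercent y hy
    have hx' : (x : G) ∈ centralizer (centralizer S : Set G) :=
      closure_le_centralizer_centralizer S x.2
    exact Subtype.ext ((mem_centralizer_iff.mp hx') _ hy')
  -- index bound
  haveI : Group.FG ↥(closure S) := Group.closure_finite_fg S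
  haveI : Fintype S := Fintype.ofFinite S
  have hrange : Nat.card ψ.range ≤ m.factorial := by
    calc Nat.card ψ.range ≤ Nat.card (Equiv.Perm S) :=
          Nat.card_le_card_of_injective _ Subtype.coe_injective
      _ = m.factorial := by
          rw [Nat.card_eq_fintype_card, Fintype.card_perm,
            ← Nat.card_eq_fintype_card, hm]
  have hrangepos : 0 < Nat.card ψ.range := Nat.card_pos
  have hindex : K.index = Nat.card ψ.range := Subgroup.index_ker ψ
  haveI : K.FiniteIndex := ⟨by rw [hindex]; exact hrangepos.ne'⟩
  have hrankH : Group.rank ↥(closure S) ≤ m := hm ▸ rank_closure_finite_le_nat_card S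
  have hrankK : Group.rank ↥K ≤ m.factorial * m := by
    calc Group.rank ↥K ≤ K.index * Group.rank ↥(closure S) := rank_le_index_mul_rank K
      _ ≤ m.factorial * m := Nat.mul_le_mul (hindex ▸ hrange) hrankH
  have hdvd : Nat.card ↥K ∣ e ^ Group.rank ↥K := by
    apply card_dvd_exponent_pow_rank'
    intro g
    have hg : ((g : ↥(closure S)) : G) ^ e = 1 := he' _ (g : ↥(closure S)).2
    ext
    push_cast
    simpa using hg
  have hcardK : Nat.card ↥K ≤ e ^ (m.factorial * m) := by
    refine (Nat.le_of_dvd (pow_pos he _) hdvd).trans ?_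
    exact Nat.pow_le_pow_right he hrankK
  have hcardKpos : 0 < Nat.card ↥K := by
    rcases Nat.eq_zero_or_pos (Nat.card ↥K) with h0 | h
    · rw [h0, zero_dvd_iff] at hdvd; exact absurd hdvd (pow_pos he _).ne'
    · exact h
  have hmul : Nat.card ↥K * K.index = Nat.card ↥(closure S) := K.card_mul_index
  constructor
  · rw [← hmul]
    exact Nat.mul_ne_zero hcardKpos.ne' (by rw [hindex]; exact hrangepos.ne')
  · rw [← hmul]
    exact Nat.mul_le_mul hcardK (hindex ▸ hrange)

open Subgroup in
/-- If a group `G` has precisely `m` `w`-values and `w(G)` has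
finite exponent `e`, then the order of `w(G)` is `(e,m)`-bounded. -/
theorem verbal_subgroup_order_bounded_of_exponent (e m : ℕ) (he : 0 < e) :
    ∃ B : ℕ, ∀ (G : Type u) [Group G] (w : FreeGroup ℕ),
      (wValues w G).Finite → (wValues w G).ncard = m →
      (∀ g ∈ verbalSubgroup w G, g ^ e = 1) →
      ((verbalSubgroup w G : Set G)).Finite ∧
        (verbalSubgroup w G : Set G).ncard ≤ B := by
  refine ⟨e ^ (m.factorial * m) * m.factorial, ?_⟩
  intro G _ w hfin hm he'
  set S : Set G := wValues w G with hS
  haveI : Finite ↥S := hfin.to_subtype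
  have hconj : ∀ g x : G, x ∈ S → g * x * g⁻¹ ∈ S := by
    rintro g x ⟨f, rfl⟩
    refine ⟨fun i => g * f i * g⁻¹, ?_⟩
    have h := FreeGroup.ext_hom (FreeGroup.lift (fun i => g * f i * g⁻¹))
      ((MulAut.conj g).toMonoidHom.comp (FreeGroup.lift f)) (by intro a; simp)
    rw [h]
    simp
  have hm' : Nat.card ↥S = m := by rw [Nat.card_coe_set_eq]; exact hm
  have main := aux_closure_card_bound e m he S hconj hm' he'
  have hfin' : ((verbalSubgroup w G : Set G)).Finite :=
    Set.finite_coe_iff.mp (Nat.finite_of_card_ne_zero main.1)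
  refine ⟨hfin', ?_⟩
  rw [← Nat.card_coe_set_eq]
  exact main.2
end
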